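/- If the feasibility assumption r2/p1 ∈ [1/T, T] holds with p1, r2 > 0 and T ≥ 1, then for each choice j ∈ {1,2} of today's arc there exists ȳ ∈ [0,1]² with ȳ₁ + ȳ₂ = 1 such that p_j + T·(p1·ȳ₁ - r2·ȳ₂) = 0, i.e., Karma-neutral planning over the horizon is feasible regardless of today's choice. -/
import Mathlib


/-- Under the feasibility assumption, Karma-neutral planning over the horizon is
feasible regardless of today's arc choice. -/
theorem stmt14 (p1 r2 T : ℝ) (hp1 : 0 < p1) (hr2 : 0 < r2) (hT : 1 ≤ T)
    (hratio1 : 1 / T ≤ r2 / p1) (hratio2 : r2 / p1 ≤ T) :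
    ∀ pj : ℝ, (pj = p1 ∨ pj = -r2) →
      ∃ ybar1 ∈ Set.Icc (0:ℝ) 1, pj + T * (p1 * ybar1 - r2 * (1 - ybar1)) = 0 := by
  intro pj hpj
  have hT0 : (0:ℝ) < T := by linarith
  have hden : (0:ℝ) < T * (p1 + r2) := by positivity
  have h1 : p1 ≤ T * r2 := by
    have := (div_le_div_iff₀ hT0 hp1).mp hratio1
    linarith
  have h2 : r2 ≤ T * p1 := by
    have := (div_le_iff₀ hp1).mp hratio2
    linarith
  refine ⟨(T * r2 - pj) / (T * (p1 + r2)), ⟨?_, ?_⟩, ?_⟩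
  · apply div_nonneg _ hden.le
    rcases hpj with h | h <;> rw [h] <;> linarith
  · rw [div_le_one hden]
    rcases hpj with h | h <;> rw [h] <;> nlinarith
  · field_simp
    ring
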